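/- Let F be a Borel probability measure on R and let 0 < q < 1 be such that the point 0 is a q-quantile of F, i.e., F((-∞,0)) ≤ q and F((0,∞)) ≤ 1 − q. Then there exists an absolute constant c such that for all positive integers n, the Kolmogorov distance satisfies ρ(F^{*n}, F^{*(n+1)}) ≤ c/√(n · min{q, 1−q}). -/

import Mathlib

open MeasureTheory ProbabilityTheory

/-- n-fold convolution power of a measure on ℝ (0-th power is the Dirac measure at 0). -/
noncomputable def convPow1 (F : Measure ℝ) : ℕ → Measure ℝ
  | 0 => Measure.dirac 0
  | (n + 1) => (convPow1 F n).conv F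

/-- Kolmogorov (uniform) distance between measures on ℝ -/
noncomputable def kolm (F G : Measure ℝ) : ℝ :=
  ⨆ x : ℝ, |(F (Set.Iic x)).toReal - (G (Set.Iic x)).toReal|

namespace ConvAux

section Part1

open intervalIntegral Real Complex Finset



lemma int_exp_ne (m : ℤ) (hm : m ≠ 0) :
    (∫ t in (-Real.pi)..Real.pi, Complex.exp (((m : ℂ) * Complex.I) * t)) = 0 := by
  have hc : (m : ℂ) * Complex.I ≠ 0 := by
    simp [Complex.I_ne_zero, hm]
  rw [integral_exp_mul_complex hc]
  have h2 : Complex.exp ((m:ℂ) * Complex.I * (Real.pi:ℂ)) =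
      Complex.exp ((m:ℂ) * Complex.I * (-(Real.pi:ℂ))) := by
    have h1 : Complex.exp ((m:ℂ) * (2 * (Real.pi:ℂ) * Complex.I)) = 1 :=
      Complex.exp_int_mul_two_pi_mul_I m
    calc Complex.exp ((m:ℂ) * Complex.I * (Real.pi:ℂ))
        = Complex.exp ((m:ℂ) * Complex.I * (-(Real.pi:ℂ)) + (m:ℂ) * (2*(Real.pi:ℂ)*Complex.I)) := by
          ring_nf
      _ = Complex.exp ((m:ℂ) * Complex.I * (-(Real.pi:ℂ))) := by
          rw [Complex.exp_add, h1, mul_one]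
  rw [show ((-Real.pi : ℝ) : ℂ) = -(Real.pi : ℂ) by push_cast; ring, h2]
  simp

lemma int_exp_zero : (∫ t in (-Real.pi)..Real.pi, (1 : ℂ)) = 2 * Real.pi := by
  rw [intervalIntegral.integral_const]
  push_cast
  simp
  ring


variable {q : ℝ}

/-- the characteristic function of the Bernoulli(q) distribution -/
noncomputable def phi (q : ℝ) (t : ℝ) : ℂ := (1 - q : ℝ) + (q : ℝ) * Complex.exp (t * Complex.I)

lemma phi_cont : Continuous (phi q) := by
  unfold phi
  fun_prop

lemma phi_pow_expand (n : ℕ) (t : ℝ) :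
    phi q t ^ n = ∑ j ∈ Finset.range (n+1),
      (((n.choose j : ℝ) * q^j * (1-q)^(n-j) : ℝ) : ℂ) * Complex.exp ((j:ℝ) * t * Complex.I) := by
  unfold phi
  rw [add_comm ((1-q:ℝ):ℂ)]
  rw [add_pow]
  refine Finset.sum_congr rfl fun j hj => ?_
  rw [mul_pow, ← Complex.exp_nat_mul]
  push_cast
  ring

lemma key_identity (n k : ℕ) (hk : k ≤ n) :
    (∫ t in (-Real.pi)..Real.pi, phi q t ^ n * Complex.exp (-(k:ℝ) * t * Complex.I))
      = (2 * Real.pi : ℝ) * (((n.choose k : ℝ) * q^k * (1-q)^(n-k) : ℝ) : ℂ) := by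
  have hint : ∀ j : ℕ, IntervalIntegrable (fun t : ℝ =>
      (((n.choose j : ℝ) * q^j * (1-q)^(n-j) : ℝ) : ℂ) *
        Complex.exp (((j:ℝ) - (k:ℝ)) * t * Complex.I)) MeasureTheory.volume (-Real.pi) Real.pi := by
    intro j
    apply Continuous.intervalIntegrable
    fun_prop
  have heq : ∀ t : ℝ, phi q t ^ n * Complex.exp (-(k:ℝ) * t * Complex.I)
      = ∑ j ∈ Finset.range (n+1), (((n.choose j : ℝ) * q^j * (1-q)^(n-j) : ℝ) : ℂ) *
          Complex.exp (((j:ℝ) - (k:ℝ)) * t * Complex.I) := by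
    intro t
    rw [phi_pow_expand, Finset.sum_mul]
    refine Finset.sum_congr rfl fun j hj => ?_
    rw [mul_assoc, ← Complex.exp_add]
    ring_nf
  rw [intervalIntegral.integral_congr (fun t _ => heq t)]
  rw [intervalIntegral.integral_finset_sum (fun j _ => hint j)]
  have hterm : ∀ j ∈ Finset.range (n+1),
      (∫ t in (-Real.pi)..Real.pi, (((n.choose j : ℝ) * q^j * (1-q)^(n-j) : ℝ) : ℂ) *
        Complex.exp (((j:ℝ) - (k:ℝ)) * t * Complex.I))
      = if j = k then (2 * Real.pi : ℝ) * (((n.choose k : ℝ) * q^k * (1-q)^(n-k) : ℝ) : ℂ) else 0 := by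
    intro j hj
    rw [intervalIntegral.integral_const_mul]
    by_cases hjk : j = k
    · subst hjk
      rw [if_pos rfl]
      simp only [sub_self, zero_mul, Complex.exp_zero]
      rw [int_exp_zero]
      push_cast
      ring
    · rw [if_neg hjk]
      have hm : ((j : ℤ) - (k : ℤ)) ≠ 0 := by
        intro h
        exact hjk (by omega)
      have : ∀ t : ℝ, Complex.exp (((j:ℝ) - (k:ℝ)) * t * Complex.I)
          = Complex.exp ((((j - k : ℤ) : ℂ) * Complex.I) * t) := by
        intro t; push_cast; ring_nf
      rw [intervalIntegral.integral_congr (fun t _ => this t), int_exp_ne _ hm, mul_zero]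
  rw [Finset.sum_congr rfl hterm, Finset.sum_ite_eq' (Finset.range (n+1)) k]
  simp [Nat.lt_succ_of_le hk, Nat.lt_succ_iff, hk]

lemma norm_phi_le (h0 : 0 < q) (h1 : q < 1) (t : ℝ) :
    ‖phi q t‖ ≤ Real.exp (-(q * (1 - q)) * (1 - Real.cos t)) := by
  have hqq : 0 ≤ q * (1 - q) := by nlinarith
  have hcos : Real.cos t ≤ 1 := Real.cos_le_one t
  have hsq : ‖phi q t‖ ^ 2 = 1 - 2 * (q * (1-q)) * (1 - Real.cos t) := by
    rw [Complex.sq_norm]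
    unfold phi
    rw [Complex.normSq_apply]
    simp [Complex.exp_ofReal_mul_I_re, Complex.exp_ofReal_mul_I_im,
      Complex.add_re, Complex.add_im, Complex.mul_re, Complex.mul_im]
    have := Real.sin_sq_add_cos_sq t
    nlinarith [Real.sin_sq_add_cos_sq t]
  have hle : ‖phi q t‖ ^ 2 ≤ (Real.exp (-(q * (1-q)) * (1 - Real.cos t))) ^ 2 := by
    rw [hsq, ← Real.exp_nat_mul]
    have : ((2:ℕ):ℝ) * (-(q * (1-q)) * (1 - Real.cos t)) = -(2 * (q*(1-q)) * (1 - Real.cos t)) := by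
      push_cast; ring
    rw [this]
    have := Real.add_one_le_exp (-(2 * (q*(1-q)) * (1 - Real.cos t)))
    linarith
  calc ‖phi q t‖ = Real.sqrt (‖phi q t‖ ^ 2) := (Real.sqrt_sq (norm_nonneg _)).symm
    _ ≤ Real.sqrt (Real.exp (-(q * (1-q)) * (1 - Real.cos t)) ^ 2) := Real.sqrt_le_sqrt hle
    _ = Real.exp (-(q * (1-q)) * (1 - Real.cos t)) := Real.sqrt_sq (Real.exp_nonneg _)

lemma norm_phi_pow_le (h0 : 0 < q) (h1 : q < 1) (n : ℕ) {t : ℝ} (ht : |t| ≤ Real.pi) :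
    ‖phi q t‖ ^ n ≤ Real.exp (-(2 * n * (q * (1-q)) / Real.pi ^ 2) * t ^ 2) := by
  have h1' : ‖phi q t‖ ^ n ≤ Real.exp (-(q * (1 - q)) * (1 - Real.cos t)) ^ n :=
    pow_le_pow_left₀ (norm_nonneg _) (norm_phi_le h0 h1 t) n
  rw [← Real.exp_nat_mul] at h1'
  refine h1'.trans (Real.exp_le_exp.2 ?_)
  have hj : Real.cos t ≤ 1 - 2 / Real.pi ^ 2 * t ^ 2 := Real.cos_le_one_sub_mul_cos_sq ht
  have hqq : 0 ≤ q * (1 - q) := by nlinarith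
  have hpi : (0:ℝ) < Real.pi ^ 2 := by positivity
  have heq : -(2 * (n:ℝ) * (q * (1-q)) / Real.pi ^ 2) * t ^ 2
      = ((n:ℝ) * (q * (1-q))) * (-(2 / Real.pi ^ 2 * t ^ 2)) := by
    field_simp
  have heq2 : (n:ℝ) * (-(q * (1-q)) * (1 - Real.cos t))
      = ((n:ℝ) * (q * (1-q))) * (-(1 - Real.cos t)) := by ring
  rw [heq, heq2]
  exact mul_le_mul_of_nonneg_left (by linarith) (by positivity)

theorem binom_atom_le (n k : ℕ) (hn : 1 ≤ n) (h0 : 0 < q) (h1 : q < 1) :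
    (n.choose k : ℝ) * q ^ k * (1-q) ^ (n-k)
      ≤ Real.sqrt (Real.pi / (8 * n * (q * (1-q)))) := by
  have hq1 : 0 < 1 - q := by linarith
  by_cases hk : k ≤ n
  swap
  · rw [Nat.choose_eq_zero_of_lt (by omega)]
    simp [Real.sqrt_nonneg]
  set B : ℝ := (n.choose k : ℝ) * q ^ k * (1-q) ^ (n-k) with hBdef
  have hB : 0 ≤ B := by positivity
  set a : ℝ := 2 * n * (q * (1-q)) / Real.pi ^ 2 with hadef
  have hn' : (0:ℝ) < n := by exact_mod_cast hn
  have ha : 0 < a := by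
    apply div_pos
    · nlinarith [mul_pos h0 hq1]
    · positivity
  have hpi : (0:ℝ) < Real.pi := Real.pi_pos
  have hab : -Real.pi ≤ Real.pi := by linarith
  -- step 1 : 2πB ≤ ∫ ‖phi‖^n
  have step1 : 2 * Real.pi * B ≤ ∫ t in (-Real.pi)..Real.pi, ‖phi q t‖ ^ n := by
    have hnorm := intervalIntegral.norm_integral_le_integral_norm (μ := volume)
      (f := fun t : ℝ => phi q t ^ n * Complex.exp (-(k:ℝ) * t * Complex.I))
      (a := -Real.pi) (b := Real.pi) hab
    rw [key_identity n k hk] at hnorm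
    have hL : ‖((2 * Real.pi : ℝ) : ℂ) * ((B : ℝ) : ℂ)‖ = 2 * Real.pi * B := by
      rw [norm_mul, Complex.norm_real, Complex.norm_real, Real.norm_eq_abs, Real.norm_eq_abs]
      rw [_root_.abs_of_nonneg (by positivity : (0:ℝ) ≤ 2 * Real.pi), _root_.abs_of_nonneg hB]
    rw [hL] at hnorm
    refine hnorm.trans (le_of_eq (intervalIntegral.integral_congr fun t _ => ?_))
    rw [norm_mul, norm_pow]
    have : ‖Complex.exp (-(k:ℝ) * (t:ℂ) * Complex.I)‖ = 1 := by
      rw [Complex.norm_exp]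
      simp
    rw [this, mul_one]
  -- step 2 : ∫ ‖phi‖^n ≤ ∫ gaussian on interval
  have step2 : (∫ t in (-Real.pi)..Real.pi, ‖phi q t‖ ^ n)
      ≤ ∫ t in (-Real.pi)..Real.pi, Real.exp (-a * t ^ 2) := by
    apply intervalIntegral.integral_mono_on hab
    · exact (phi_cont.norm.pow n).intervalIntegrable _ _
    · exact (Real.continuous_exp.comp (by fun_prop)).intervalIntegrable _ _
    · intro t ht
      have habs : |t| ≤ Real.pi := abs_le.2 ⟨ht.1, ht.2⟩
      have := norm_phi_pow_le h0 h1 n habs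
      simpa [hadef] using this
  -- step 3 : interval gaussian ≤ full gaussian = sqrt (π/a)
  have step3 : (∫ t in (-Real.pi)..Real.pi, Real.exp (-a * t ^ 2)) ≤ Real.sqrt (Real.pi / a) := by
    rw [intervalIntegral.integral_of_le hab, ← integral_gaussian a]
    exact setIntegral_le_integral (integrable_exp_neg_mul_sq ha)
      (Filter.Eventually.of_forall fun x => Real.exp_nonneg _)
  -- combine
  have hfinal : 2 * Real.pi * B ≤ Real.sqrt (Real.pi / a) := le_trans step1 (le_trans step2 step3)
  have hsqrteq : Real.sqrt (Real.pi / a)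
      = 2 * Real.pi * Real.sqrt (Real.pi / (8 * n * (q * (1-q)))) := by
    have h8 : (0:ℝ) < 8 * n * (q * (1-q)) := by nlinarith [mul_pos h0 hq1]
    have : Real.pi / a = (2 * Real.pi) ^ 2 * (Real.pi / (8 * n * (q * (1-q)))) := by
      rw [hadef]
      field_simp
      ring
    rw [this, Real.sqrt_mul (by positivity), Real.sqrt_sq (by positivity)]
  rw [hsqrteq] at hfinal
  nlinarith [Real.sqrt_nonneg (Real.pi / (8 * n * (q * (1-q)))), hpi, hfinal]


end Part1

open scoped ENNReal

lemma conv_apply' (μ ν : Measure ℝ) [SFinite μ] [SFinite ν] {s : Set ℝ}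
    (hs : MeasurableSet s) :
    (μ.conv ν) s = ∫⁻ a, ν {b | a + b ∈ s} ∂μ := by
  rw [Measure.conv, Measure.map_apply measurable_add hs,
    Measure.prod_apply (measurable_add hs)]
  rfl

lemma conv_Iic (μ ν : Measure ℝ) [SFinite μ] [SFinite ν] (x : ℝ) :
    (μ.conv ν) (Set.Iic x) = ∫⁻ a, ν (Set.Iic (x - a)) ∂μ := by
  rw [conv_apply' μ ν measurableSet_Iic]
  congr 1
  ext a
  congr 1
  ext b
  simp [Set.mem_Iic]
  constructor <;> intro h <;> linarith

lemma conv_Iic_le (ρ ν : Measure ℝ) [IsProbabilityMeasure ρ] [IsProbabilityMeasure ν]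
    (hν : ν (Set.Iio 0) = 0) (x : ℝ) :
    (ρ.conv ν) (Set.Iic x) ≤ ρ (Set.Iic x) := by
  rw [conv_Iic]
  calc ∫⁻ a, ν (Set.Iic (x - a)) ∂ρ
      ≤ ∫⁻ a, (Set.Iic x).indicator (fun _ => 1) a ∂ρ := by
        apply lintegral_mono
        intro a
        by_cases ha : a ≤ x
        · rw [Set.indicator_of_mem (Set.mem_Iic.2 ha)]
          exact prob_le_one
        · rw [Set.indicator_of_notMem (by simpa using ha)]
          have hsub : Set.Iic (x - a) ⊆ Set.Iio 0 := by
            intro b hb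
            simp only [Set.mem_Iic] at hb
            simp only [Set.mem_Iio]
            linarith [lt_of_not_ge ha]
          exact le_trans (measure_mono hsub) (le_of_eq hν)
    _ = ρ (Set.Iic x) := by
        rw [lintegral_indicator measurableSet_Iic]
        simp

lemma le_conv_Iic (ρ μ : Measure ℝ) [IsProbabilityMeasure ρ] [IsProbabilityMeasure μ]
    (hμ : μ (Set.Ioi 0) = 0) (x : ℝ) :
    ρ (Set.Iic x) ≤ (ρ.conv μ) (Set.Iic x) := by
  rw [conv_Iic]
  calc ρ (Set.Iic x) = ∫⁻ a, (Set.Iic x).indicator (fun _ => 1) a ∂ρ := by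
        rw [lintegral_indicator measurableSet_Iic]
        simp
    _ ≤ ∫⁻ a, μ (Set.Iic (x - a)) ∂ρ := by
        apply lintegral_mono
        intro a
        by_cases ha : a ≤ x
        · rw [Set.indicator_of_mem (Set.mem_Iic.2 ha)]
          have h1 : μ (Set.Iic (x - a)) + μ (Set.Ioi (x - a)) = 1 := by
            rw [← measure_union (Set.Iic_disjoint_Ioi le_rfl) measurableSet_Ioi]
            simp [Set.Iic_union_Ioi]
          have h2 : μ (Set.Ioi (x - a)) = 0 := by
            refine le_antisymm (le_trans (measure_mono ?_) (le_of_eq hμ)) zero_le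
            intro b hb
            simp only [Set.mem_Ioi] at hb ⊢
            linarith
          rw [h2, add_zero] at h1
          exact le_of_eq h1.symm
        · rw [Set.indicator_of_notMem (by simpa using ha)]
          exact zero_le

lemma smul_conv (c : ℝ≥0∞) (μ ν : Measure ℝ) [SFinite μ] [SFinite ν] :
    (c • μ).conv ν = c • (μ.conv ν) := by
  ext s hs
  rw [conv_apply' _ _ hs, Measure.smul_apply, smul_eq_mul, conv_apply' _ _ hs,
    lintegral_smul_measure, smul_eq_mul]

lemma conv_smul (c : ℝ≥0∞) (hc : c ≠ ⊤) (μ ν : Measure ℝ) [SFinite μ] [SFinite ν] :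
    μ.conv (c • ν) = c • (μ.conv ν) := by
  ext s hs
  rw [conv_apply' _ _ hs, Measure.smul_apply, smul_eq_mul, conv_apply' _ _ hs]
  simp only [Measure.smul_apply, smul_eq_mul]
  rw [lintegral_const_mul' _ _ hc]

lemma finset_sum_conv {ι : Type*} (s : Finset ι) (m : ι → Measure ℝ) [∀ i, SFinite (m i)]
    (ν : Measure ℝ) [SFinite ν] :
    (∑ i ∈ s, m i).conv ν = ∑ i ∈ s, (m i).conv ν := by
  classical
  haveI : SFinite (∑ i ∈ s, m i) := by
    induction s using Finset.induction_on with
    | empty => simpa using inferInstanceAs (SFinite (0 : Measure ℝ))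
    | insert _ _ h ih =>
      rw [Finset.sum_insert h]
      infer_instance
  ext t ht
  rw [conv_apply' _ _ ht, Measure.finset_sum_apply, lintegral_finset_sum_measure]
  exact Finset.sum_congr rfl fun i _ => (conv_apply' _ _ ht).symm

lemma conv_assoc (μ ν ρ : Measure ℝ) [SFinite μ] [SFinite ν] [SFinite ρ] :
    (μ.conv ν).conv ρ = μ.conv (ν.conv ρ) := by
  have e1 := Measure.map_prod_map (f := fun x : ℝ × ℝ => x.1 + x.2) (g := (id : ℝ → ℝ))
    (μ.prod ν) ρ measurable_add measurable_id
  rw [Measure.map_id] at e1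
  have e2 := Measure.map_prod_map (f := (id : ℝ → ℝ)) (g := fun x : ℝ × ℝ => x.1 + x.2)
    μ (ν.prod ρ) measurable_id measurable_add
  rw [Measure.map_id] at e2
  have h1 : (μ.conv ν).conv ρ
      = Measure.map (fun p : (ℝ × ℝ) × ℝ => p.1.1 + p.1.2 + p.2) ((μ.prod ν).prod ρ) := by
    rw [Measure.conv, Measure.conv, e1,
      Measure.map_map measurable_add (measurable_add.prodMap measurable_id)]
    rfl
  have h2 : μ.conv (ν.conv ρ)
      = Measure.map (fun p : ℝ × (ℝ × ℝ) => p.1 + (p.2.1 + p.2.2)) (μ.prod (ν.prod ρ)) := by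
    rw [Measure.conv, Measure.conv, e2,
      Measure.map_map measurable_add (measurable_id.prodMap measurable_add)]
    rfl
  rw [h1, h2, ← Measure.prodAssoc_prod,
    Measure.map_map (by fun_prop) MeasurableEquiv.prodAssoc.measurable]
  congr 1
  ext p
  simp [MeasurableEquiv.prodAssoc, add_assoc]


lemma decomposition (F : Measure ℝ) [IsProbabilityMeasure F] (q : ℝ) (h0 : 0 < q) (h1 : q < 1)
    (hlo : (F (Set.Iio 0)).toReal ≤ q) (hhi : (F (Set.Ioi 0)).toReal ≤ 1 - q) :
    ∃ μ ν : Measure ℝ, IsProbabilityMeasure μ ∧ IsProbabilityMeasure ν ∧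
      μ (Set.Ioi 0) = 0 ∧ ν (Set.Iio 0) = 0 ∧
      F = ENNReal.ofReal q • μ + ENNReal.ofReal (1-q) • ν := by
  set a := F (Set.Iio 0) with ha
  set b := F (Set.Ioi 0) with hb
  set Q := ENNReal.ofReal q with hQ
  set Q' := ENNReal.ofReal (1-q) with hQ'
  have haT : a ≠ ⊤ := measure_ne_top F _
  have hbT : b ≠ ⊤ := measure_ne_top F _
  have hQT : Q ≠ ⊤ := ENNReal.ofReal_ne_top
  have hQ'T : Q' ≠ ⊤ := ENNReal.ofReal_ne_top
  have hQ0 : Q ≠ 0 := by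
    simp [hQ, ENNReal.ofReal_eq_zero]
    linarith
  have hQ'0 : Q' ≠ 0 := by
    simp [hQ', ENNReal.ofReal_eq_zero]
    linarith
  have haQ : a ≤ Q := by
    rw [← ENNReal.ofReal_toReal haT]
    exact ENNReal.ofReal_le_ofReal hlo
  have hbQ' : b ≤ Q' := by
    rw [← ENNReal.ofReal_toReal hbT]
    exact ENNReal.ofReal_le_ofReal hhi
  have hQQ' : Q + Q' = 1 := by
    rw [hQ, hQ', ← ENNReal.ofReal_add (le_of_lt h0) (by linarith)]
    norm_num
  -- partition identity
  have hpart : a + F {0} + b = 1 := by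
    have h01 : Set.Iio (0:ℝ) ∪ {0} = Set.Iic 0 := Set.Iio_union_right
    have hd1 : Disjoint (Set.Iio (0:ℝ)) {0} := by
      simp [Set.disjoint_singleton_right]
    have hd2 : Disjoint (Set.Iic (0:ℝ)) (Set.Ioi 0) := Set.Iic_disjoint_Ioi le_rfl
    have e1 : F (Set.Iic 0) = a + F {0} := by
      rw [← h01, measure_union hd1 (measurableSet_singleton 0)]
    have e2 : F (Set.Iic 0) + b = 1 := by
      rw [← measure_union hd2 measurableSet_Ioi, Set.Iic_union_Ioi, measure_univ]
    rw [← e1, e2]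
  set r := Q - a with hr
  have har : a + r = Q := add_tsub_cancel_of_le haQ
  have hrT : r ≠ ⊤ := by
    rw [hr]
    exact ENNReal.sub_ne_top hQT
  have hrF0 : r ≤ F {0} := by
    rw [hr, tsub_le_iff_left]
    have hstep : Q + Q' ≤ (a + F {0}) + Q' := by
      rw [hQQ', ← hpart]
      exact add_le_add le_rfl hbQ'
    exact (ENNReal.add_le_add_iff_right hQ'T).1 hstep
  set s0 := F {0} - r with hs0
  have hs0T : s0 ≠ ⊤ := by
    rw [hs0]
    exact ENNReal.sub_ne_top (measure_ne_top F _)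
  have hrs0 : r + s0 = F {0} := add_tsub_cancel_of_le hrF0
  have hbs0 : b + s0 = Q' := by
    have h3 : Q + (b + s0) = Q + Q' := by
      rw [hQQ', ← hpart, ← har, ← hrs0]
      ring
    exact (ENNReal.add_right_inj hQT).1 h3
  set μ := Q⁻¹ • (F.restrict (Set.Iio 0) + r • Measure.dirac 0) with hμ
  set ν := Q'⁻¹ • (F.restrict (Set.Ioi 0) + s0 • Measure.dirac 0) with hν
  have hQμ : Q • μ = F.restrict (Set.Iio 0) + r • Measure.dirac 0 := by
    rw [hμ, smul_smul, ENNReal.mul_inv_cancel hQ0 hQT, one_smul]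
  have hQν : Q' • ν = F.restrict (Set.Ioi 0) + s0 • Measure.dirac 0 := by
    rw [hν, smul_smul, ENNReal.mul_inv_cancel hQ'0 hQ'T, one_smul]
  refine ⟨μ, ν, ?_, ?_, ?_, ?_, ?_⟩
  · constructor
    rw [hμ, Measure.smul_apply, Measure.add_apply, Measure.restrict_apply MeasurableSet.univ,
      Set.univ_inter, Measure.smul_apply, Measure.dirac_apply' _ MeasurableSet.univ]
    simp only [Set.mem_univ, Set.indicator_of_mem, Pi.one_apply, smul_eq_mul, mul_one]
    rw [← ha, har]
    exact ENNReal.inv_mul_cancel hQ0 hQT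
  · constructor
    rw [hν, Measure.smul_apply, Measure.add_apply, Measure.restrict_apply MeasurableSet.univ,
      Set.univ_inter, Measure.smul_apply, Measure.dirac_apply' _ MeasurableSet.univ]
    simp only [Set.mem_univ, Set.indicator_of_mem, Pi.one_apply, smul_eq_mul, mul_one]
    rw [← hb, hbs0]
    exact ENNReal.inv_mul_cancel hQ'0 hQ'T
  · rw [hμ, Measure.smul_apply, Measure.add_apply, Measure.restrict_apply measurableSet_Ioi,
      Measure.smul_apply, Measure.dirac_apply' _ measurableSet_Ioi]
    have : Set.Ioi (0:ℝ) ∩ Set.Iio 0 = ∅ := by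
      ext y
      simp only [Set.mem_inter_iff, Set.mem_Ioi, Set.mem_Iio, Set.mem_empty_iff_false, iff_false]
      intro ⟨h1', h2'⟩
      linarith
    rw [this]
    simp
  · rw [hν, Measure.smul_apply, Measure.add_apply, Measure.restrict_apply measurableSet_Iio,
      Measure.smul_apply, Measure.dirac_apply' _ measurableSet_Iio]
    have : Set.Iio (0:ℝ) ∩ Set.Ioi 0 = ∅ := by
      ext y
      simp only [Set.mem_inter_iff, Set.mem_Ioi, Set.mem_Iio, Set.mem_empty_iff_false, iff_false]
      intro ⟨h1', h2'⟩
      linarith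
    rw [this]
    simp
  · rw [hQμ, hQν]
    have hsplit : F = F.restrict (Set.Iio 0) + F.restrict {0} + F.restrict (Set.Ioi 0) := by
      rw [← Measure.restrict_union (by simp [Set.disjoint_singleton_right])
          (measurableSet_singleton 0), Set.Iio_union_right,
        ← Measure.restrict_union (Set.Iic_disjoint_Ioi le_rfl) measurableSet_Ioi,
        Set.Iic_union_Ioi, Measure.restrict_univ]
    have hsing : F.restrict {0} = F {0} • Measure.dirac 0 := by
      rw [Measure.restrict_singleton]
    conv_lhs => rw [hsplit, hsing, ← hrs0, add_smul]
    abel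



instance convPow1_prob (F : Measure ℝ) [IsProbabilityMeasure F] (n : ℕ) :
    IsProbabilityMeasure (convPow1 F n) := by
  induction n with
  | zero => exact (by infer_instance : IsProbabilityMeasure (Measure.dirac (0:ℝ)))
  | succ n ih => exact Measure.probabilitymeasure_of_probabilitymeasures_conv _ _

/-- real binomial weight -/
def w (q : ℝ) (n k : ℕ) : ℝ := (n.choose k : ℝ) * q ^ k * (1-q) ^ (n-k)

lemma w_nonneg {q : ℝ} (h0 : 0 ≤ q) (h1 : q ≤ 1) (n k : ℕ) : 0 ≤ w q n k := by
  unfold w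
  have : (0:ℝ) ≤ 1 - q := by linarith
  positivity

/-- Pascal-type identity for the weights, valid for all j (ℕ-subtraction conventions). -/
lemma w_succ {q : ℝ} (n : ℕ) {j : ℕ} (hj : 1 ≤ j) (hj2 : j ≤ n + 1) :
    w q (n+1) j = q * w q n (j-1) + (1-q) * w q n j := by
  obtain ⟨i, rfl⟩ : ∃ i, j = i + 1 := ⟨j - 1, by omega⟩
  unfold w
  simp only [Nat.add_sub_cancel]
  by_cases hin : i + 1 ≤ n
  · have h1 : n + 1 - (i + 1) = n - i := by omega
    have h2 : n - i = n - (i+1) + 1 := by omega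
    rw [Nat.choose_succ_succ, h1, h2]
    push_cast
    ring
  · have hi : i = n := by omega
    subst hi
    rw [Nat.choose_succ_succ]
    have h1 : i + 1 - (i + 1) = 0 := by omega
    have h2 : i - (i+1) = 0 := by omega
    have h3 : i - i = 0 := by omega
    rw [h1, h2, h3, Nat.choose_succ_self]
    push_cast
    ring

lemma expansion (μ ν : Measure ℝ) [IsProbabilityMeasure μ] [IsProbabilityMeasure ν]
    (q : ℝ) (h0 : 0 < q) (h1 : q < 1) (F : Measure ℝ)
    (hF : F = ENNReal.ofReal q • μ + ENNReal.ofReal (1-q) • ν) (n : ℕ) :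
    convPow1 F n = ∑ k ∈ Finset.range (n+1),
      ENNReal.ofReal (w q n k) • ((convPow1 μ k).conv (convPow1 ν (n-k))) := by
  have h0' : (0:ℝ) ≤ q := h0.le
  have h1' : (0:ℝ) ≤ 1 - q := by linarith
  haveI hFP : IsProbabilityMeasure F := by
    constructor
    rw [hF]
    simp only [Measure.add_apply, Measure.smul_apply, measure_univ, smul_eq_mul, mul_one]
    rw [← ENNReal.ofReal_add h0' h1']
    norm_num
  induction n with
  | zero =>
    have hw00 : w q 0 0 = 1 := by simp [w]
    simp [convPow1, hw00]
  | succ n ih =>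
    have hQT : ENNReal.ofReal q ≠ ⊤ := ENNReal.ofReal_ne_top
    have hQ'T : ENNReal.ofReal (1-q) ≠ ⊤ := ENNReal.ofReal_ne_top
    -- the building blocks
    set B : ℕ → Measure ℝ := fun j => (convPow1 μ j).conv (convPow1 ν (n+1-j)) with hB
    have hApF : ∀ k, k ≤ n → ((convPow1 μ k).conv (convPow1 ν (n-k))).conv F
        = ENNReal.ofReal q • B (k+1) + ENNReal.ofReal (1-q) • B k := by
      intro k hk
      have hμk : ((convPow1 μ k).conv (convPow1 ν (n-k))).conv μ = B (k+1) := by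
        rw [conv_assoc, Measure.conv_comm (convPow1 ν (n-k)) μ, ← conv_assoc]
        simp only [hB]
        have h2 : (n+1) - (k+1) = n - k := by omega
        rw [h2]
        rfl
      have hνk : ((convPow1 μ k).conv (convPow1 ν (n-k))).conv ν = B k := by
        rw [conv_assoc]
        have h2 : (convPow1 ν (n-k)).conv ν = convPow1 ν (n+1-k) := by
          have : n + 1 - k = (n - k) + 1 := by omega
          rw [this]
          rfl
        rw [h2, hB]
      rw [hF, Measure.conv_add, conv_smul _ hQT, conv_smul _ hQ'T, hμk, hνk]
    calc convPow1 F (n+1) = (convPow1 F n).conv F := rfl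
      _ = ∑ k ∈ Finset.range (n+1),
            (ENNReal.ofReal (w q n k) • ((convPow1 μ k).conv (convPow1 ν (n-k)))).conv F := by
          rw [ih, finset_sum_conv]
      _ = ∑ k ∈ Finset.range (n+1), ((ENNReal.ofReal (w q n k) * ENNReal.ofReal q) • B (k+1)
            + (ENNReal.ofReal (w q n k) * ENNReal.ofReal (1-q)) • B k) := by
          refine Finset.sum_congr rfl fun k hk => ?_
          rw [smul_conv, hApF k (by simpa [Nat.lt_succ_iff] using hk), smul_add,
            smul_smul, smul_smul]
      _ = ∑ k ∈ Finset.range (n+1), (ENNReal.ofReal (q * w q n k)) • B (k+1)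
            + ∑ k ∈ Finset.range (n+1), (ENNReal.ofReal ((1-q) * w q n k)) • B k := by
          rw [← Finset.sum_add_distrib]
          refine Finset.sum_congr rfl fun k hk => ?_
          rw [ENNReal.ofReal_mul h0', ENNReal.ofReal_mul h1',
            mul_comm (ENNReal.ofReal q), mul_comm (ENNReal.ofReal (1-q))]
      _ = ∑ j ∈ Finset.range (n+2), ENNReal.ofReal (w q (n+1) j) • B j := by
          -- extend the second sum to range (n+2) using w q n (n+1) = 0
          have hz : ENNReal.ofReal ((1-q) * w q n (n+1)) • B (n+1) = 0 := by
            have : w q n (n+1) = 0 := by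
              unfold w
              rw [Nat.choose_eq_zero_of_lt (by omega)]
              simp
            simp [this]
          have hsum2 : ∑ k ∈ Finset.range (n+2), (ENNReal.ofReal ((1-q) * w q n k)) • B k
              = ∑ k ∈ Finset.range (n+1), (ENNReal.ofReal ((1-q) * w q n k)) • B k := by
            rw [Finset.sum_range_succ, hz, add_zero]
          rw [← hsum2]
          -- peel off j = 0 on both the goal and the shifted first sum
          rw [Finset.sum_range_succ' (fun j => ENNReal.ofReal (w q (n+1) j) • B j) (n+1),
            Finset.sum_range_succ' (fun k => ENNReal.ofReal ((1-q) * w q n k) • B k) (n+1)]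
          have hw0 : w q (n+1) 0 = (1-q) * w q n 0 := by
            unfold w
            simp [pow_succ]
            ring
          rw [hw0, ← add_assoc, ← Finset.sum_add_distrib]
          congr 1
          refine Finset.sum_congr rfl fun i hi => ?_
          rw [← add_smul]
          congr 1
          have hwp := w_succ (q := q) n (j := i + 1) (by omega) (by
            simp only [Finset.mem_range] at hi
            omega)
          simp only [Nat.add_sub_cancel] at hwp
          rw [hwp, ENNReal.ofReal_add (mul_nonneg h0' (w_nonneg h0' (by linarith) n i))
            (mul_nonneg h1' (w_nonneg h0' (by linarith) n (i+1)))]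
  -- ensure B matches goal form
          

lemma pascal_sum (q : ℝ) (n : ℕ) (hh : ℕ → ℝ) :
    ∑ j ∈ Finset.range (n+2), w q (n+1) j * hh j
      = q * (∑ k ∈ Finset.range (n+1), w q n k * hh (k+1))
        + (1-q) * (∑ k ∈ Finset.range (n+1), w q n k * hh k) := by
  rw [Finset.sum_range_succ' (fun j => w q (n+1) j * hh j) (n+1)]
  have hterm : ∀ i ∈ Finset.range (n+1), w q (n+1) (i+1) * hh (i+1)
      = q * (w q n i * hh (i+1)) + (1-q) * (w q n (i+1) * hh (i+1)) := by
    intro i hi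
    have hwp := w_succ (q := q) n (j := i+1) (by omega)
      (by simp only [Finset.mem_range] at hi; omega)
    simp only [Nat.add_sub_cancel] at hwp
    rw [hwp]; ring
  rw [Finset.sum_congr rfl hterm, Finset.sum_add_distrib]
  have hw0 : w q (n+1) 0 = (1-q) * w q n 0 := by
    simp only [w, Nat.choose_zero_right, pow_zero, Nat.sub_zero, pow_succ]
    ring
  have hlast : w q n (n+1) = 0 := by
    simp [w, Nat.choose_eq_zero_of_lt]
  have hfull := Finset.sum_range_succ' (fun j => w q n j * hh j) (n+1)
  have hfull2 := Finset.sum_range_succ (fun j => w q n j * hh j) (n+1)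
  simp only [hlast, zero_mul, add_zero] at hfull2
  have h2 : ∑ i ∈ Finset.range (n+1), w q n (i+1) * hh (i+1)
      = (∑ j ∈ Finset.range (n+1), w q n j * hh j) - w q n 0 * hh 0 := by
    have := hfull.symm.trans hfull2
    linarith
  rw [hw0,
    show ∑ x ∈ Finset.range (n+1), q * (w q n x * hh (x+1))
      = q * ∑ x ∈ Finset.range (n+1), w q n x * hh (x+1) from (Finset.mul_sum _ _ _).symm,
    show ∑ x ∈ Finset.range (n+1), (1-q) * (w q n (x+1) * hh (x+1))
      = (1-q) * ∑ x ∈ Finset.range (n+1), w q n (x+1) * hh (x+1) from (Finset.mul_sum _ _ _).symm,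
    h2]
  ring

lemma toReal_sum_smul (n : ℕ) (c : ℕ → ℝ) (hc : ∀ k, 0 ≤ c k) (m : ℕ → Measure ℝ)
    (hm : ∀ k, IsProbabilityMeasure (m k)) (s : Set ℝ) :
    ((∑ k ∈ Finset.range n, ENNReal.ofReal (c k) • m k) s).toReal
      = ∑ k ∈ Finset.range n, c k * ((m k) s).toReal := by
  rw [Measure.finset_sum_apply, ENNReal.toReal_sum (fun a _ => by
    rw [Measure.smul_apply, smul_eq_mul]
    exact ENNReal.mul_ne_top ENNReal.ofReal_ne_top (measure_ne_top _ _))]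
  exact Finset.sum_congr rfl fun k _ => by
    rw [Measure.smul_apply, smul_eq_mul, ENNReal.toReal_mul, ENNReal.toReal_ofReal (hc k)]

lemma key_bound (F μ ν : Measure ℝ) [IsProbabilityMeasure F] [IsProbabilityMeasure μ]
    [IsProbabilityMeasure ν] (q : ℝ) (h0 : 0 < q) (h1 : q < 1)
    (hμ0 : μ (Set.Ioi 0) = 0) (hν0 : ν (Set.Iio 0) = 0)
    (hF : F = ENNReal.ofReal q • μ + ENNReal.ofReal (1-q) • ν)
    (n : ℕ) (B : ℝ) (hwB : ∀ k, w q n k ≤ B) (hB0 : 0 ≤ B) (x : ℝ) :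
    |(convPow1 F n (Set.Iic x)).toReal - (convPow1 F (n+1) (Set.Iic x)).toReal| ≤ B := by
  have h0' : (0:ℝ) ≤ q := h0.le
  have h1' : (0:ℝ) ≤ 1 - q := by linarith
  have hwnn : ∀ k, 0 ≤ w q n k := w_nonneg h0' (by linarith) n
  set g : ℕ → ℝ := fun k => (((convPow1 μ k).conv (convPow1 ν (n-k))) (Set.Iic x)).toReal with hgd
  set hh : ℕ → ℝ := fun j =>
    (((convPow1 μ j).conv (convPow1 ν (n+1-j))) (Set.Iic x)).toReal with hhd
  -- expansions
  have hFn : (convPow1 F n (Set.Iic x)).toReal = ∑ k ∈ Finset.range (n+1), w q n k * g k := by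
    rw [expansion μ ν q h0 h1 F hF n]
    exact toReal_sum_smul (n+1) (w q n) hwnn _ (fun k => by infer_instance) _
  have hFn1 : (convPow1 F (n+1) (Set.Iic x)).toReal
      = ∑ j ∈ Finset.range (n+2), w q (n+1) j * hh j := by
    rw [expansion μ ν q h0 h1 F hF (n+1)]
    exact toReal_sum_smul (n+2) (w q (n+1)) (w_nonneg h0' (by linarith) (n+1)) _
      (fun k => by infer_instance) _
  -- bounds on hh
  have hh0 : ∀ j, 0 ≤ hh j := fun j => ENNReal.toReal_nonneg
  have hh1 : ∀ j, hh j ≤ 1 := by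
    intro j
    rw [hhd]
    exact ENNReal.toReal_le_of_le_ofReal one_pos.le (by simpa using prob_le_one)
  -- sandwich
  have hhg : ∀ k, k ≤ n → hh k ≤ g k := by
    intro k hk
    rw [hgd, hhd]
    have hidx : n + 1 - k = (n - k) + 1 := by omega
    have hmeas : (convPow1 μ k).conv (convPow1 ν (n+1-k))
        = ((convPow1 μ k).conv (convPow1 ν (n-k))).conv ν := by
      rw [hidx, conv_assoc]
      rfl
    simp only [hmeas]
    refine ENNReal.toReal_mono (measure_ne_top _ _) ?_
    exact conv_Iic_le _ _ hν0 x
  have hgh : ∀ k, k ≤ n → g k ≤ hh (k+1) := by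
    intro k hk
    rw [hgd, hhd]
    have hidx : n + 1 - (k+1) = n - k := by omega
    have hmeas : (convPow1 μ (k+1)).conv (convPow1 ν (n+1-(k+1)))
        = ((convPow1 μ k).conv (convPow1 ν (n-k))).conv μ := by
      rw [hidx]
      have : convPow1 μ (k+1) = (convPow1 μ k).conv μ := rfl
      rw [this, conv_assoc, Measure.conv_comm μ (convPow1 ν (n-k)), ← conv_assoc]
    simp only [hmeas]
    refine ENNReal.toReal_mono (measure_ne_top _ _) ?_
    exact le_conv_Iic _ _ hμ0 x
  -- the telescoping bound
  set S : ℝ := ∑ k ∈ Finset.range (n+1), w q n k * (hh (k+1) - hh k) with hSd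
  have hSB : S ≤ B := by
    have hstep : S ≤ B * (hh (n+1) - hh 0) := by
      have hle : S ≤ ∑ k ∈ Finset.range (n+1), B * (hh (k+1) - hh k) := by
        rw [hSd]
        refine Finset.sum_le_sum fun k hk => ?_
        have hk' : k ≤ n := by simp only [Finset.mem_range] at hk; omega
        have hd : 0 ≤ hh (k+1) - hh k := by
          have := (hhg k hk').trans (hgh k hk')
          linarith
        exact mul_le_mul_of_nonneg_right (hwB k) hd
      refine hle.trans (le_of_eq ?_)
      rw [← Finset.mul_sum, Finset.sum_range_sub (fun i => hh i)]
    refine hstep.trans ?_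
    have : hh (n+1) - hh 0 ≤ 1 := by
      have := hh1 (n+1)
      have := hh0 0
      linarith
    nlinarith
  -- X and Y
  set X : ℝ := ∑ k ∈ Finset.range (n+1), w q n k * (hh (k+1) - g k) with hXd
  set Y : ℝ := ∑ k ∈ Finset.range (n+1), w q n k * (g k - hh k) with hYd
  have hX0 : 0 ≤ X := Finset.sum_nonneg fun k hk => mul_nonneg (hwnn k) (by
    have hk' : k ≤ n := by simp only [Finset.mem_range] at hk; omega
    have := hgh k hk'
    linarith)
  have hY0 : 0 ≤ Y := Finset.sum_nonneg fun k hk => mul_nonneg (hwnn k) (by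
    have hk' : k ≤ n := by simp only [Finset.mem_range] at hk; omega
    have := hhg k hk'
    linarith)
  have hXS : X ≤ S := Finset.sum_le_sum fun k hk => by
    have hk' : k ≤ n := by simp only [Finset.mem_range] at hk; omega
    have := hhg k hk'
    have := hwnn k
    nlinarith
  have hYS : Y ≤ S := Finset.sum_le_sum fun k hk => by
    have hk' : k ≤ n := by simp only [Finset.mem_range] at hk; omega
    have := hgh k hk'
    have := hwnn k
    nlinarith
  -- the difference identity
  have hdiff : (convPow1 F (n+1) (Set.Iic x)).toReal - (convPow1 F n (Set.Iic x)).toReal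
      = q * X - (1-q) * Y := by
    rw [hFn1, hFn, pascal_sum q n hh, hXd, hYd,
      Finset.mul_sum, Finset.mul_sum, Finset.mul_sum, Finset.mul_sum,
      ← Finset.sum_add_distrib, ← Finset.sum_sub_distrib, ← Finset.sum_sub_distrib]
    exact Finset.sum_congr rfl fun k _ => by ring
  rw [abs_sub_comm, hdiff]
  rw [abs_le]
  constructor
  · have hq'Y : (1-q) * Y ≤ Y := by nlinarith
    have hqX : 0 ≤ q * X := mul_nonneg h0' hX0
    have : Y ≤ B := hYS.trans hSB
    linarith
  · have hqX : q * X ≤ X := by nlinarith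
    have hq'Y : 0 ≤ (1-q) * Y := mul_nonneg h1' hY0
    have : X ≤ B := hXS.trans hSB
    linarith

end ConvAux

/-- If 0 is a q-quantile of F, then ρ(F^n, F^{n+1}) ≤ c/√(n·min{q,1-q}) with an
absolute constant c. -/
theorem statement9 :
    ∃ c : ℝ, 0 < c ∧ ∀ (F : Measure ℝ), IsProbabilityMeasure F → ∀ q : ℝ, 0 < q → q < 1 →
      (F (Set.Iio 0)).toReal ≤ q → (F (Set.Ioi 0)).toReal ≤ 1 - q →
      ∀ n : ℕ, 0 < n →
        kolm (convPow1 F n) (convPow1 F (n + 1)) ≤ c / Real.sqrt (n * min q (1 - q)) := by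
  refine ⟨1, one_pos, ?_⟩
  intro F hFP q h0 h1 hlo hhi n hn
  obtain ⟨μ, ν, hμP, hνP, hμ0, hν0, hF⟩ := ConvAux.decomposition F q h0 h1 hlo hhi
  have hn' : (0:ℝ) < n := by exact_mod_cast hn
  set m := min q (1-q) with hm
  have hm0 : 0 < m := lt_min h0 (by linarith)
  have hmq : m / 2 ≤ q * (1-q) := by
    rcases le_total q (1-q) with hc | hc
    · rw [hm, min_eq_left hc]
      nlinarith
    · rw [hm, min_eq_right hc]
      nlinarith
  set B : ℝ := Real.sqrt (Real.pi / (8 * n * (q * (1-q)))) with hBd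
  have hB0 : 0 ≤ B := Real.sqrt_nonneg _
  have hwB : ∀ k, ConvAux.w q n k ≤ B := by
    intro k
    rw [hBd]
    exact ConvAux.binom_atom_le n k hn h0 h1
  have hq1' : 0 < q * (1-q) := by nlinarith
  have hBle : B ≤ 1 / Real.sqrt (n * m) := by
    rw [hBd]
    have harg : Real.pi / (8 * n * (q * (1-q))) ≤ 1 / (n * m) := by
      have h4 : Real.pi / (8 * n * (q * (1-q))) ≤ 4 / (4 * (n * m)) := by
        apply div_le_div₀ (by norm_num) Real.pi_le_four (by positivity)
        nlinarith
      refine h4.trans (le_of_eq ?_)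
      rw [div_eq_div_iff (by positivity) (by positivity)]
      ring
    refine (Real.sqrt_le_sqrt harg).trans (le_of_eq ?_)
    rw [one_div, one_div, ← Real.sqrt_inv]
  refine le_trans ?_ (by simpa using hBle)
  unfold kolm
  refine ciSup_le fun x => ?_
  exact ConvAux.key_bound F μ ν q h0 h1 hμ0 hν0 hF n B hwB hB0 x
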